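/- Fix σ > 0 and T > 0. The function V(t,x,w) = x - e^w + (1/4) e^{-w} x² (e^{σ²(T-t)} - 1), defined for t ∈ [0,T], x ∈ ℝ, w ∈ ℝ, solves the HJB equation V_t + σ² x² sup_{Z ∈ ℝ} { Z V_x + (Z²/2) V_w + (1/2)(V_xx + Z² V_ww) + Z V_xw } = 0 with terminal condition V(T,x,w) = x - e^w, and for x ≠ 0 the supremum is attained at Z* = (1/2) e^{-w}. -/

import Mathlib

open Real

private lemma expneg_hasDeriv (w : ℝ) :
    HasDerivAt (fun v : ℝ => Real.exp (-v)) (-Real.exp (-w)) w := by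
  simpa [Function.comp_def] using (Real.hasDerivAt_exp (-w)).comp w (hasDerivAt_neg w)

theorem cpt_explicit_solution (σ T : ℝ) (hσ : 0 < σ) (hT : 0 < T)
    (V : ℝ → ℝ → ℝ → ℝ)
    (hV : ∀ t x w, V t x w
      = x - Real.exp w + (1/4) * Real.exp (-w) * x^2 * (Real.exp (σ^2 * (T - t)) - 1)) :
    (∀ t ∈ Set.Icc (0:ℝ) T, ∀ x w : ℝ,
      deriv (fun s => V s x w) t
        + σ^2 * x^2 * sSup {y : ℝ | ∃ Z : ℝ,
            y = Z * deriv (fun z => V t z w) x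
              + (Z^2/2) * deriv (fun v => V t x v) w
              + (1/2) * (deriv (deriv (fun z => V t z w)) x
                  + Z^2 * deriv (deriv (fun v => V t x v)) w)
              + Z * deriv (fun v => deriv (fun z => V t z v) x) w} = 0)
    ∧ (∀ x w : ℝ, V T x w = x - Real.exp w)
    ∧ (∀ t ∈ Set.Icc (0:ℝ) T, ∀ x w : ℝ, x ≠ 0 →
        IsMaxOn (fun Z : ℝ =>
            Z * deriv (fun z => V t z w) x
              + (Z^2/2) * deriv (fun v => V t x v) w
              + (1/2) * (deriv (deriv (fun z => V t z w)) x
                  + Z^2 * deriv (deriv (fun v => V t x v)) w)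
              + Z * deriv (fun v => deriv (fun z => V t z v) x) w)
          Set.univ ((1/2) * Real.exp (-w))) := by
  -- first spatial derivative
  have hVx : ∀ t x w : ℝ, deriv (fun z => V t z w) x
      = 1 + (1/2) * Real.exp (-w) * (Real.exp (σ^2 * (T - t)) - 1) * x := by
    intro t x w
    have hf : (fun z => V t z w)
        = fun z => z - Real.exp w + (1/4) * Real.exp (-w) * z^2 * (Real.exp (σ^2 * (T - t)) - 1) :=
      funext fun z => hV t z w
    rw [hf]
    have h : HasDerivAt
        (fun z : ℝ => z - Real.exp w + (1/4) * Real.exp (-w) * z^2 * (Real.exp (σ^2 * (T - t)) - 1))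
        (1 + (1/4) * Real.exp (-w) * ((2:ℕ) * x ^ 1) * (Real.exp (σ^2 * (T - t)) - 1)) x :=
      ((hasDerivAt_id x).sub_const _).add
        (((hasDerivAt_pow 2 x).const_mul ((1/4) * Real.exp (-w))).mul_const _)
    rw [h.deriv]; push_cast; ring
  -- second spatial derivative
  have hVxx : ∀ t x w : ℝ, deriv (deriv (fun z => V t z w)) x
      = (1/2) * Real.exp (-w) * (Real.exp (σ^2 * (T - t)) - 1) := by
    intro t x w
    have hf : deriv (fun z => V t z w)
        = fun x => 1 + (1/2) * Real.exp (-w) * (Real.exp (σ^2 * (T - t)) - 1) * x :=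
      funext fun x => hVx t x w
    rw [hf]
    have h : HasDerivAt
        (fun x : ℝ => 1 + (1/2) * Real.exp (-w) * (Real.exp (σ^2 * (T - t)) - 1) * x)
        ((1/2) * Real.exp (-w) * (Real.exp (σ^2 * (T - t)) - 1) * 1) x :=
      ((hasDerivAt_id x).const_mul _).const_add 1
    rw [h.deriv]; ring
  -- first derivative in w
  have hVw : ∀ t x w : ℝ, deriv (fun v => V t x v) w
      = -Real.exp w - (1/4) * Real.exp (-w) * x^2 * (Real.exp (σ^2 * (T - t)) - 1) := by
    intro t x w
    have hf : (fun v => V t x v)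
        = fun v => x - Real.exp v + (1/4) * Real.exp (-v) * x^2 * (Real.exp (σ^2 * (T - t)) - 1) :=
      funext fun v => hV t x v
    rw [hf]
    have h : HasDerivAt
        (fun v : ℝ => x - Real.exp v + (1/4) * Real.exp (-v) * x^2 * (Real.exp (σ^2 * (T - t)) - 1))
        (-Real.exp w + ((1/4) * -Real.exp (-w)) * x^2 * (Real.exp (σ^2 * (T - t)) - 1)) w :=
      ((Real.hasDerivAt_exp w).const_sub x).add
        ((((expneg_hasDeriv w).const_mul (1/4)).mul_const (x^2)).mul_const _)
    rw [h.deriv]; ring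
  -- second derivative in w
  have hVww : ∀ t x w : ℝ, deriv (deriv (fun v => V t x v)) w
      = -Real.exp w + (1/4) * Real.exp (-w) * x^2 * (Real.exp (σ^2 * (T - t)) - 1) := by
    intro t x w
    have hf : deriv (fun v => V t x v)
        = fun w => -Real.exp w - (1/4) * Real.exp (-w) * x^2 * (Real.exp (σ^2 * (T - t)) - 1) :=
      funext fun w => hVw t x w
    rw [hf]
    have h : HasDerivAt
        (fun w : ℝ => -Real.exp w - (1/4) * Real.exp (-w) * x^2 * (Real.exp (σ^2 * (T - t)) - 1))
        (-Real.exp w - ((1/4) * -Real.exp (-w)) * x^2 * (Real.exp (σ^2 * (T - t)) - 1)) w :=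
      ((Real.hasDerivAt_exp w).neg).sub
        ((((expneg_hasDeriv w).const_mul (1/4)).mul_const (x^2)).mul_const _)
    rw [h.deriv]; ring
  -- mixed derivative (in the form produced after rewriting hVx under the binder)
  have hVxw : ∀ t x w : ℝ,
      deriv (fun v => 1 + (1/2) * Real.exp (-v) * (Real.exp (σ^2 * (T - t)) - 1) * x) w
      = -(1/2) * Real.exp (-w) * (Real.exp (σ^2 * (T - t)) - 1) * x := by
    intro t x w
    have h : HasDerivAt
        (fun v : ℝ => 1 + (1/2) * Real.exp (-v) * (Real.exp (σ^2 * (T - t)) - 1) * x)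
        ((((1/2) * -Real.exp (-w)) * (Real.exp (σ^2 * (T - t)) - 1)) * x) w :=
      ((((expneg_hasDeriv w).const_mul (1/2)).mul_const _).mul_const x).const_add 1
    rw [h.deriv]; ring
  -- time derivative
  have hVt : ∀ t x w : ℝ, deriv (fun s => V s x w) t
      = -(σ^2) * (1/4) * Real.exp (-w) * x^2 * Real.exp (σ^2 * (T - t)) := by
    intro t x w
    have hf : (fun s => V s x w)
        = fun s => x - Real.exp w + (1/4) * Real.exp (-w) * x^2 * (Real.exp (σ^2 * (T - s)) - 1) :=
      funext fun s => hV s x w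
    rw [hf]
    have hin : HasDerivAt (fun s : ℝ => σ^2 * (T - s)) (σ^2 * -1) t :=
      ((hasDerivAt_id t).const_sub T).const_mul (σ^2)
    have h : HasDerivAt
        (fun s : ℝ => x - Real.exp w + (1/4) * Real.exp (-w) * x^2 * (Real.exp (σ^2 * (T - s)) - 1))
        ((1/4) * Real.exp (-w) * x^2 * (Real.exp (σ^2 * (T - t)) * (σ^2 * -1))) t :=
      ((hin.exp.sub_const 1).const_mul _).const_add _
    rw [h.deriv]; ring
  have hprod : ∀ w : ℝ, Real.exp w * Real.exp (-w) = 1 := by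
    intro w; rw [← Real.exp_add]; simp
  -- the bound on the Hamiltonian
  have hbound : ∀ t x w Z : ℝ,
      Z * (1 + (1/2) * Real.exp (-w) * (Real.exp (σ^2 * (T - t)) - 1) * x)
        + (Z^2/2) * (-Real.exp w - (1/4) * Real.exp (-w) * x^2 * (Real.exp (σ^2 * (T - t)) - 1))
        + (1/2) * ((1/2) * Real.exp (-w) * (Real.exp (σ^2 * (T - t)) - 1)
            + Z^2 * (-Real.exp w + (1/4) * Real.exp (-w) * x^2 * (Real.exp (σ^2 * (T - t)) - 1)))
        + Z * (-(1/2) * Real.exp (-w) * (Real.exp (σ^2 * (T - t)) - 1) * x)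
      ≤ (1/4) * Real.exp (-w) * Real.exp (σ^2 * (T - t)) := by
    intro t x w Z
    nlinarith [mul_nonneg (Real.exp_pos w).le (sq_nonneg (Z - (1/2) * Real.exp (-w))),
      hprod w, Real.exp_pos (-w), Real.exp_pos w]
  -- the max value is attained at Z*
  have hattain : ∀ t x w : ℝ,
      ((1/2) * Real.exp (-w)) * (1 + (1/2) * Real.exp (-w) * (Real.exp (σ^2 * (T - t)) - 1) * x)
        + (((1/2) * Real.exp (-w))^2/2) * (-Real.exp w - (1/4) * Real.exp (-w) * x^2 * (Real.exp (σ^2 * (T - t)) - 1))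
        + (1/2) * ((1/2) * Real.exp (-w) * (Real.exp (σ^2 * (T - t)) - 1)
            + ((1/2) * Real.exp (-w))^2 * (-Real.exp w + (1/4) * Real.exp (-w) * x^2 * (Real.exp (σ^2 * (T - t)) - 1)))
        + ((1/2) * Real.exp (-w)) * (-(1/2) * Real.exp (-w) * (Real.exp (σ^2 * (T - t)) - 1) * x)
      = (1/4) * Real.exp (-w) * Real.exp (σ^2 * (T - t)) := by
    intro t x w
    linear_combination (-(Real.exp (-w))/4) * hprod w
  refine ⟨?_, ?_, ?_⟩
  · intro t ht x w
    simp only [hVx, hVw, hVxx, hVww, hVxw, hVt]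
    have hS : sSup {y : ℝ | ∃ Z : ℝ,
        y = Z * (1 + (1/2) * Real.exp (-w) * (Real.exp (σ^2 * (T - t)) - 1) * x)
          + (Z^2/2) * (-Real.exp w - (1/4) * Real.exp (-w) * x^2 * (Real.exp (σ^2 * (T - t)) - 1))
          + (1/2) * ((1/2) * Real.exp (-w) * (Real.exp (σ^2 * (T - t)) - 1)
              + Z^2 * (-Real.exp w + (1/4) * Real.exp (-w) * x^2 * (Real.exp (σ^2 * (T - t)) - 1)))
          + Z * (-(1/2) * Real.exp (-w) * (Real.exp (σ^2 * (T - t)) - 1) * x)}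
        = (1/4) * Real.exp (-w) * Real.exp (σ^2 * (T - t)) := by
      apply le_antisymm
      · exact csSup_le ⟨_, ⟨(1/2) * Real.exp (-w), rfl⟩⟩
          (by rintro y ⟨Z, rfl⟩; exact hbound t x w Z)
      · exact le_csSup ⟨_, by rintro y ⟨Z, rfl⟩; exact hbound t x w Z⟩
          ⟨(1/2) * Real.exp (-w), (hattain t x w).symm⟩
    rw [hS]; ring
  · intro x w; rw [hV T x w]; simp
  · intro t ht x w hx Z hZ
    simp only [hVx, hVw, hVxx, hVww, hVxw, Set.mem_setOf_eq]
    exact le_trans (hbound t x w Z) (hattain t x w).ge
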